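/- Let μ : [0,∞) → [0,∞) be continuous with μ(0) = 0, twice continuously differentiable on (0,∞), strictly increasing, concave, and positive on (0,∞), satisfying the Osgood condition, and assume λ(r) = r + log μ(e^{−r}) satisfies λ'' < 0 on all of ℝ, so that ε := λ'/2 : ℝ → (0,1/2) is strictly decreasing with ε(r) → 0 as r → ∞. Let ε̄ : ℝ → (0,1/2) be continuously differentiable, strictly decreasing, with ε̄(r) → 0 as r → ∞ and ε̄(r) ≥ ε(r) for all r ∈ ℝ. Fix C > 0 and define α on the range of ε by α(ε(r)) = C·exp(λ(r) − 2r·ε(r)), and ᾱ on the range of ε̄ by ᾱ(ε̄(r)) = C·exp(λ(r) − 2r·ε̄(r)). Then ᾱ(x) ≤ α(x) for every x lying in both ranges. (That is, overestimating ε leads to an underestimate of α.) -/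

import Mathlib

open MeasureTheory Real Filter

theorem stmt18 (μ : ℝ → ℝ)
    (hc : ContinuousOn μ (Set.Ici 0)) (h0 : μ 0 = 0)
    (hC2 : ContDiffOn ℝ 2 μ (Set.Ioi 0))
    (hmono : StrictMonoOn μ (Set.Ici 0))
    (hconc : ConcaveOn ℝ (Set.Ioi 0) μ)
    (hpos : ∀ x > 0, 0 < μ x)
    (hOsgood : ∫⁻ r in Set.Ioo (0:ℝ) 1, ENNReal.ofReal (μ r)⁻¹ = ⊤)
    (lam eps : ℝ → ℝ)
    (hlam : ∀ r, lam r = r + Real.log (μ (Real.exp (-r))))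
    (heps : ∀ r, eps r = deriv lam r / 2)
    (hlam'' : ∀ r : ℝ, deriv (deriv lam) r < 0)
    (hepsrange : ∀ r : ℝ, eps r ∈ Set.Ioo (0:ℝ) (1/2))
    (hepsanti : StrictAnti eps)
    (hepslim : Tendsto eps atTop (nhds 0))
    (epsbar : ℝ → ℝ)
    (hbarC1 : ContDiff ℝ 1 epsbar)
    (hbarrange : ∀ r : ℝ, epsbar r ∈ Set.Ioo (0:ℝ) (1/2))
    (hbaranti : StrictAnti epsbar)
    (hbarlim : Tendsto epsbar atTop (nhds 0))
    (hge : ∀ r : ℝ, eps r ≤ epsbar r)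
    (C : ℝ) (hC : 0 < C)
    (α αbar : ℝ → ℝ)
    (hα : ∀ r : ℝ, α (eps r) = C * Real.exp (lam r - 2 * r * eps r))
    (hαbar : ∀ r : ℝ, αbar (epsbar r) = C * Real.exp (lam r - 2 * r * epsbar r)) :
    ∀ x : ℝ, (∃ r, eps r = x) → (∃ r, epsbar r = x) → αbar x ≤ α x := by
  rintro x ⟨r1, hr1⟩ ⟨r2, hr2⟩
  -- lam is differentiable
  have hlamd : Differentiable ℝ lam := by
    have hfe : lam = fun r => r + Real.log (μ (Real.exp (-r))) := funext hlam
    rw [hfe]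
    intro r
    have h1 : (0:ℝ) < Real.exp (-r) := Real.exp_pos _
    have hμd : DifferentiableAt ℝ μ (Real.exp (-r)) :=
      ((hC2.differentiableOn (by norm_num)).differentiableAt
        (isOpen_Ioi.mem_nhds h1))
    have hinner : DifferentiableAt ℝ (fun r : ℝ => Real.exp (-r)) r :=
      (differentiableAt_id.neg).exp
    have hcomp : DifferentiableAt ℝ (fun r : ℝ => μ (Real.exp (-r))) r :=
      hμd.comp r hinner
    have hμpos : 0 < μ (Real.exp (-r)) := hpos _ h1
    exact differentiableAt_id.add
      (hcomp.log hμpos.ne')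
  have e1 : α x = C * Real.exp (lam r1 - 2 * r1 * x) := hr1 ▸ hα r1
  have e2 : αbar x = C * Real.exp (lam r2 - 2 * r2 * x) := hr2 ▸ hαbar r2
  -- r1 ≤ r2
  have hle : eps r2 ≤ eps r1 := by
    rw [hr1]; rw [← hr2]; exact hge r2
  have hr12 : r1 ≤ r2 := le_of_not_gt (fun h => (not_le.2 (hepsanti h)) hle)
  have key : lam r2 - 2 * r2 * x ≤ lam r1 - 2 * r1 * x := by
    rcases eq_or_lt_of_le hr12 with heq | hlt
    · rw [heq]
    · obtain ⟨c, hc, hderiv⟩ := exists_deriv_eq_slope lam hlt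
        (hlamd.continuous.continuousOn) (hlamd.differentiableOn)
    -- deriv lam c = 2 * eps c ≤ 2 * x
      have hdc : deriv lam c = 2 * eps c := by rw [heps c]; ring
      have hεc : eps c ≤ x := by
        rw [← hr1]; exact hepsanti.antitone hc.1.le
      have hslope : (lam r2 - lam r1) / (r2 - r1) ≤ 2 * x := by
        rw [← hderiv, hdc]; linarith
      have hub : lam r2 - lam r1 ≤ 2 * x * (r2 - r1) := by
        have h := (div_le_iff₀ (by linarith : (0:ℝ) < r2 - r1)).1 hslope
        linarith [h]
      nlinarith [hub]
  rw [e1, e2]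
  have := Real.exp_le_exp.2 key
  nlinarith [this, Real.exp_pos (lam r2 - 2 * r2 * x)]
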